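/- arXiv:1204.5393 — 2 statements merged into one kernel-verified Lean document; each statement's English description precedes it below -/
import Mathlib

section
/- Let x be a uniformly recurrent sequence over a finite alphabet and let u, v be prefixes of x with u a prefix of v. Then every return word to v in x is a concatenation of return words to u, i.e., belongs to the submonoid generated by the return words to u. -/
/-- The factor of the sequence `x` starting at position `i` of length `n`. -/
def seqWord {A : Type*} (x : ℕ → A) (i n : ℕ) : List A :=
  (List.range n).map (fun k => x (i + k))

/-- The word `u` occurs in the sequence `x` at position `i`. -/
def occursAt {A : Type*} (x : ℕ → A) (u : List A) (i : ℕ) : Prop :=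
  seqWord x i u.length = u

/-- `u` is a factor of the sequence `x`. -/
def IsFactor {A : Type*} (x : ℕ → A) (u : List A) : Prop :=
  ∃ i, occursAt x u i

/-- `u` is a prefix of the sequence `x`. -/
def IsPrefixSeq {A : Type*} (u : List A) (x : ℕ → A) : Prop :=
  occursAt x u 0

/-- `x` is uniformly recurrent: every factor occurs in every sufficiently long window. -/
def UnifRec {A : Type*} (x : ℕ → A) : Prop :=
  ∀ u : List A, IsFactor x u → ∃ C, ∀ i, ∃ j, i ≤ j ∧ j < i + C ∧ occursAt x u j

/-- `w` is a return word to `u` in `x`: the factor between two consecutive occurrences of `u`. -/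
def IsReturnWord {A : Type*} (x : ℕ → A) (u w : List A) : Prop :=
  ∃ i j, i < j ∧ occursAt x u i ∧ occursAt x u j ∧
    (∀ k, i < k → k < j → ¬ occursAt x u k) ∧ w = seqWord x i (j - i)

/-- Apply a morphism (given on letters) to a word, by concatenation. -/
def morphApply {I A : Type*} (θ : I → List A) (l : List I) : List A :=
  (l.map θ).flatten

/-- Iterate an endomorphism `σ` of the free monoid `n` times on a word. -/
def morphIter {A : Type*} (σ : A → List A) : ℕ → List A → List A
  | 0, l => l
  | n + 1, l => morphApply σ (morphIter σ n l)

/-- `x` is ultimately periodic. -/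
def UltPeriodic {A : Type*} (x : ℕ → A) : Prop :=
  ∃ p > 0, ∃ N, ∀ n ≥ N, x (n + p) = x n

/-- `x` is linearly recurrent with constant `K`: it is uniformly recurrent and two
successive occurrences of any nonempty factor `u` differ by at most `K * |u|`. -/
def LinRec {A : Type*} (K : ℕ) (x : ℕ → A) : Prop :=
  UnifRec x ∧ ∀ u : List A, u ≠ [] → IsFactor x u →
    ∀ i, occursAt x u i → ∃ j, i < j ∧ j ≤ i + K * u.length ∧ occursAt x u j

/-- `σ` is prolongable on the letter `a`. -/
def Prolongable {A : Type*} (σ : A → List A) (a : A) : Prop :=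
  (∃ t, σ a = a :: t ∧ t ≠ []) ∧
    Filter.Tendsto (fun n => (morphIter σ n [a]).length) Filter.atTop Filter.atTop

/-- `σ` is growing: the image of each letter has length tending to infinity. -/
def Growing {A : Type*} (σ : A → List A) : Prop :=
  ∀ a, Filter.Tendsto (fun n => (morphIter σ n [a]).length) Filter.atTop Filter.atTop

/-- `σ` is primitive: some power sends every letter to a word containing every letter. -/
def Primitive {A : Type*} (σ : A → List A) : Prop :=
  ∃ n > 0, ∀ a b : A, b ∈ morphIter σ n [a]

/-- `x` is the fixed point `σ^∞(a)` of `σ`, prolongable on `a`. -/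
def IsFixedPointOf {A : Type*} (σ : A → List A) (a : A) (x : ℕ → A) : Prop :=
  x 0 = a ∧ ∀ n, IsPrefixSeq (morphIter σ n [a]) x

/-- The word `w` belongs to the language of the endomorphism `σ`. -/
def InLang {A : Type*} (σ : A → List A) (w : List A) : Prop :=
  ∃ a n, w <:+: morphIter σ n [a]

/-- The word `u` occurs at position `i` in the word `w`. -/
def listOccursAt {A : Type*} (w u : List A) (i : ℕ) : Prop :=
  i + u.length ≤ w.length ∧ (w.drop i).take u.length = u

/-- `|σ^k|`: the maximal length of the image of a letter under `σ^k`. -/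
def maxLen {A : Type*} [Fintype A] [Nonempty A] (σ : A → List A) (k : ℕ) : ℕ :=
  Finset.univ.sup' Finset.univ_nonempty (fun a => (morphIter σ k [a]).length)

/-- `⟨σ^k⟩`: the minimal length of the image of a letter under `σ^k`. -/
def minLen {A : Type*} [Fintype A] [Nonempty A] (σ : A → List A) (k : ℕ) : ℕ :=
  Finset.univ.inf' Finset.univ_nonempty (fun a => (morphIter σ k [a]).length)

/-- `(R, θ, z)` is the derived-sequence data of `x` on the prefix `u`: `θ 0, …, θ (R-1)`
enumerate the return words to `u` in order of first appearance in `x`, `z` is the derived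
sequence, i.e. the coding of the decomposition of `x` into return words to `u`,
so that `Θ_{x,u}(z) = x`. -/
def IsDerivedSeq {A : Type*} (x : ℕ → A) (u : List A) (R : ℕ)
    (θ : ℕ → List A) (z : ℕ → ℕ) : Prop :=
  (∀ i < R, IsReturnWord x u (θ i)) ∧
  (∀ w, IsReturnWord x u w → ∃ i < R, θ i = w) ∧
  (∀ i < R, ∀ j < R, i < j →
      sInf {k | occursAt x (θ i) k} < sInf {k | occursAt x (θ j) k}) ∧
  (∀ k, z k < R) ∧
  (∀ n, IsPrefixSeq (morphApply θ (seqWord z 0 n)) x)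

lemma seqWord_append' {A : Type*} (x : ℕ → A) (i m n : ℕ) :
    seqWord x i m ++ seqWord x (i + m) n = seqWord x i (m + n) := by
  simp only [seqWord, List.range_add, List.map_append, List.map_map]
  congr 1
  apply List.map_congr_left
  intro k _
  simp only [Function.comp]
  congr 1
  omega

lemma occursAt_of_prefix {A : Type*} (x : ℕ → A) {u v : List A} (huv : u <+: v)
    {i : ℕ} (h : occursAt x v i) : occursAt x u i := by
  obtain ⟨t, rfl⟩ := huv
  unfold occursAt at *
  have h1 : (seqWord x i (u ++ t).length).take u.length = seqWord x i u.length := by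
    simp only [seqWord, ← List.map_take, List.take_range, List.length_append]
    congr 2
    omega
  rw [h, List.take_left] at h1
  exact h1.symm

lemma decomp_aux {A : Type*} (x : ℕ → A) (u : List A) :
    ∀ d i j, j - i = d → i < j → occursAt x u i → occursAt x u j →
    ∃ l : List (List A), (∀ p ∈ l, IsReturnWord x u p) ∧
      l.flatten = seqWord x i (j - i) := by
  intro d
  induction d using Nat.strong_induction_on with
  | _ d ih =>
    intro i j hd hij hi hj
    classical
    have hP : ∃ k, i < k ∧ k ≤ j ∧ occursAt x u k := ⟨j, hij, le_refl _, hj⟩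
    obtain ⟨hik, hkj, hkocc⟩ := Nat.find_spec hP
    have hmin : ∀ m, m < Nat.find hP → ¬(i < m ∧ m ≤ j ∧ occursAt x u m) :=
      fun m hm => Nat.find_min hP hm
    generalize hk : Nat.find hP = k at *
    have hret : IsReturnWord x u (seqWord x i (k - i)) := by
      refine ⟨i, k, hik, hi, hkocc, ?_, rfl⟩
      intro m him hmk hmocc
      exact hmin m hmk ⟨him, le_trans (le_of_lt hmk) hkj, hmocc⟩
    rcases eq_or_lt_of_le hkj with heq | hlt
    · subst heq
      exact ⟨[seqWord x i (k - i)], by simpa using hret, by simp⟩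
    · obtain ⟨l, hl1, hl2⟩ := ih (j - k) (by omega) k j rfl hlt hkocc hj
      refine ⟨seqWord x i (k - i) :: l, ?_, ?_⟩
      · intro p hp
        rcases List.mem_cons.mp hp with rfl | hp
        · exact hret
        · exact hl1 p hp
      · simp only [List.flatten_cons, hl2]
        have := seqWord_append' x i (k - i) (j - k)
        rw [show i + (k - i) = k by omega, show k - i + (j - k) = j - i by omega] at this
        exact this

/-- Proposition (Durand 1998): if `x` is uniformly recurrent and `u`, `v` are prefixes
of `x` with `u` a (non-empty) prefix of `v`, then every return word to `v` is a
concatenation of return words to `u`. -/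
theorem returnWord_concat_of_prefix {A : Type*} [Fintype A] (x : ℕ → A)
    (hur : UnifRec x) (u v : List A) (hu : u ≠ [])
    (hup : IsPrefixSeq u x) (hvp : IsPrefixSeq v x) (huv : u <+: v) :
    ∀ w, IsReturnWord x v w →
      ∃ l : List (List A), (∀ p ∈ l, IsReturnWord x u p) ∧ l.flatten = w := by
  rintro w ⟨i, j, hij, hvi, hvj, -, rfl⟩
  exact decomp_aux x u (j - i) i j rfl hij
    (occursAt_of_prefix x huv hvi) (occursAt_of_prefix x huv hvj)
end

section
/- Let x be a non-periodic linearly recurrent sequence with constant K and u a factor of x. Then the number of distinct return words to u in x is at most 4K³. -/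
section AuxReturnWords

variable {A : Type*}

private lemma seqWord_length (x : ℕ → A) (i n : ℕ) : (seqWord x i n).length = n := by
  simp [seqWord]

private lemma seqWord_ne_nil {x : ℕ → A} {i n : ℕ} (hn : 0 < n) : seqWord x i n ≠ [] := by
  intro h
  have := congrArg List.length h
  rw [seqWord_length] at this
  simp at this
  omega

private lemma seqWord_eq_iff {x : ℕ → A} {i j n : ℕ} :
    seqWord x i n = seqWord x j n ↔ ∀ t < n, x (i + t) = x (j + t) := by
  simp [seqWord, List.map_inj_left]

private lemma occursAt_seqWord_self (x : ℕ → A) (i n : ℕ) : occursAt x (seqWord x i n) i := by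
  simp [occursAt, seqWord_length]

private lemma occursAt_seqWord_iff {x : ℕ → A} {i q n : ℕ} :
    occursAt x (seqWord x i n) q ↔ ∀ t < n, x (q + t) = x (i + t) := by
  show seqWord x q (seqWord x i n).length = seqWord x i n ↔ _
  rw [seqWord_length]; exact seqWord_eq_iff

private lemma occursAt_pair {x : ℕ → A} {u : List A} {a b : ℕ}
    (ha : occursAt x u a) (hb : occursAt x u b) :
    ∀ t < u.length, x (a + t) = x (b + t) :=
  seqWord_eq_iff.1 (ha.trans hb.symm)

private lemma occursAt_transfer {x : ℕ → A} {u : List A} {i q : ℕ} (h : occursAt x u i)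
    (hpt : ∀ t < u.length, x (q + t) = x (i + t)) : occursAt x u q := by
  rw [occursAt, ← h, seqWord_length]
  exact seqWord_eq_iff.2 hpt

/-- Occurrences of a factor can be found in every window of length `K * |d|`
to the right of some occurrence. -/
private lemma chain_occ {K : ℕ} {x : ℕ → A} (hlr : LinRec K x) {d : List A} (hd : d ≠ [])
    (hKd : 0 < K * d.length) {i0 : ℕ} (h0 : occursAt x d i0) :
    ∀ m, i0 ≤ m → ∃ r, m ≤ r ∧ r < m + K * d.length ∧ occursAt x d r := by
  intro m hm
  induction m, hm using Nat.le_induction with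
  | base => exact ⟨i0, le_rfl, by omega, h0⟩
  | succ m hm ih =>
    obtain ⟨r, hr1, hr2, hr3⟩ := ih
    rcases Nat.lt_or_ge m r with h | h
    · exact ⟨r, h, by omega, hr3⟩
    · obtain ⟨j, hj1, hj2, hj3⟩ := hlr.2 d hd ⟨r, hr3⟩ r hr3
      have hrm : r = m := le_antisymm h hr1
      exact ⟨j, by omega, by omega, hj3⟩

/-- If two occurrences of `u` are at distance `p` with `K * (p + 1) ≤ |u|`,
then `x` is ultimately periodic. -/
private lemma periodic_of_close {K : ℕ} {x : ℕ → A} (hlr : LinRec K x) (hK : 1 ≤ K)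
    {u : List A} {a b : ℕ} (ha : occursAt x u a) (hb : occursAt x u b) (hab : a < b)
    (hclose : K * (b - a + 1) ≤ u.length) : UltPeriodic x := by
  set n := u.length with hn
  set p := b - a with hp
  have hp0 : 0 < p := by omega
  have hn2 : p + 1 ≤ n := le_trans (by nlinarith) hclose
  by_cases hD : ∀ m, x (m + p) = x m
  · exact ⟨p, hp0, 0, fun m _ => hD m⟩
  · push_neg at hD
    obtain ⟨k, hk⟩ := hD
    exfalso
    have hdocc : occursAt x (seqWord x k (p + 1)) k := occursAt_seqWord_self ..
    have hdne : seqWord x k (p + 1) ≠ [] := seqWord_ne_nil (by omega)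
    have hvocc : occursAt x (seqWord x a (n + p)) a := occursAt_seqWord_self ..
    have hvne : seqWord x a (n + p) ≠ [] := seqWord_ne_nil (by omega)
    have hKd : 0 < K * (seqWord x k (p + 1)).length := by
      rw [seqWord_length]; positivity
    have hKv : 0 < K * (seqWord x a (n + p)).length := by
      rw [seqWord_length]
      have : 0 < n + p := by omega
      positivity
    obtain ⟨q, hq1, hq2, hq3⟩ := chain_occ hlr hvne hKv hvocc (max a k) (le_max_left ..)
    have hqk : k ≤ q := le_trans (le_max_right a k) hq1
    obtain ⟨r, hr1, hr2, hr3⟩ := chain_occ hlr hdne hKd hdocc q hqk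
    rw [seqWord_length] at hr2
    have hv := occursAt_seqWord_iff.1 hq3
    have hd' := occursAt_seqWord_iff.1 hr3
    have hab' := occursAt_pair ha hb
    set s := r - q with hs
    have hsn : s < n := by
      have : K * (p + 1) ≤ n := hclose
      omega
    have A1 : x (q + (s + p)) = x (a + (s + p)) := hv (s + p) (by omega)
    have A2 : x (q + s) = x (a + s) := hv s (by omega)
    have A3 : x (a + s) = x (b + s) := hab' s (by omega)
    have A4 : x (r + p) = x (k + p) := hd' p (by omega)
    have A5 : x (r + 0) = x (k + 0) := hd' 0 (by omega)
    apply hk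
    calc x (k + p) = x (r + p) := A4.symm
      _ = x (q + (s + p)) := by rw [show r + p = q + (s + p) by omega]
      _ = x (a + (s + p)) := A1
      _ = x (b + s) := by rw [show a + (s + p) = b + s by omega]
      _ = x (a + s) := A3.symm
      _ = x (q + s) := A2.symm
      _ = x (r + 0) := by rw [show q + s = r + 0 by omega]
      _ = x (k + 0) := A5
      _ = x k := by rw [Nat.add_zero]

/-- Upper bound on the gap of a return word. -/
private lemma gap_le {K : ℕ} {x : ℕ → A} (hlr : LinRec K x) {u : List A} (hu : u ≠ [])
    {i j : ℕ} (hij : i < j) (hi : occursAt x u i) (hj : occursAt x u j)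
    (hbet : ∀ k, i < k → k < j → ¬ occursAt x u k) :
    j ≤ i + K * u.length := by
  obtain ⟨j2, h1, h2, h3⟩ := hlr.2 u hu ⟨i, hi⟩ i hi
  rcases Nat.lt_or_ge j2 j with h | h
  · exact absurd h3 (hbet j2 h1 h)
  · omega

/-- The return word is determined by a window of length `(K+1) * |u|`. -/
private lemma returnWord_unique {K : ℕ} {x : ℕ → A} (hlr : LinRec K x) {u : List A}
    (hu : u ≠ []) {i j i' j' q : ℕ}
    (hij : i < j) (hi : occursAt x u i) (hj : occursAt x u j)
    (hbet : ∀ k, i < k → k < j → ¬ occursAt x u k)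
    (hij' : i' < j') (hi' : occursAt x u i') (hj' : occursAt x u j')
    (hbet' : ∀ k, i' < k → k < j' → ¬ occursAt x u k)
    (hq : occursAt x (seqWord x i ((K + 1) * u.length)) q)
    (hq' : occursAt x (seqWord x i' ((K + 1) * u.length)) q) :
    seqWord x i (j - i) = seqWord x i' (j' - i') := by
  set n := u.length with hn
  have hl : (K + 1) * n = K * n + n := by ring
  have hv := occursAt_seqWord_iff.1 hq
  have hv' := occursAt_seqWord_iff.1 hq'
  have he : j - i ≤ K * n := by
    have := gap_le hlr hu hij hi hj hbet; rw [← hn] at this; omega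
  have he' : j' - i' ≤ K * n := by
    have := gap_le hlr hu hij' hi' hj' hbet'; rw [← hn] at this; omega
  have hocc1 : occursAt x u (q + (j - i)) := by
    apply occursAt_transfer hj
    intro t ht
    have h1 : x (q + (j - i + t)) = x (i + (j - i + t)) := hv _ (by omega)
    rw [show q + (j - i) + t = q + (j - i + t) by omega, h1,
      show i + (j - i + t) = j + t by omega]
  have hocc2 : occursAt x u (q + (j' - i')) := by
    apply occursAt_transfer hj'
    intro t ht
    have h1 : x (q + (j' - i' + t)) = x (i' + (j' - i' + t)) := hv' _ (by omega)
    rw [show q + (j' - i') + t = q + (j' - i' + t) by omega, h1,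
      show i' + (j' - i' + t) = j' + t by omega]
  have heq : j - i = j' - i' := by
    rcases lt_trichotomy (j - i) (j' - i') with h | h | h
    · exfalso
      apply hbet' (i' + (j - i)) (by omega) (by omega)
      apply occursAt_transfer hocc1
      intro t ht
      have h1 : x (i' + (j - i + t)) = x (q + (j - i + t)) := (hv' _ (by omega)).symm
      rw [show i' + (j - i) + t = i' + (j - i + t) by omega, h1,
        show q + (j - i + t) = q + (j - i) + t by omega]
    · exact h
    · exfalso
      apply hbet (i + (j' - i')) (by omega) (by omega)
      apply occursAt_transfer hocc2
      intro t ht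
      have h1 : x (i + (j' - i' + t)) = x (q + (j' - i' + t)) := (hv _ (by omega)).symm
      rw [show i + (j' - i') + t = i + (j' - i' + t) by omega, h1,
        show q + (j' - i' + t) = q + (j' - i') + t by omega]
  rw [← heq]
  apply seqWord_eq_iff.2
  intro t ht
  rw [← hv t (by omega), ← hv' t (by omega)]

private lemma bucket_aux {δ a b : ℕ} (hδ : 0 < δ) (hab : a ≤ b) (h : a / δ = b / δ) :
    b - a < δ := by
  have h1 := Nat.div_add_mod a δ
  have h2 := Nat.div_add_mod b δ
  have h3 := Nat.mod_lt a hδ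
  have h4 := Nat.mod_lt b hδ
  rw [h] at h1
  generalize δ * (b / δ) = P at h1 h2
  omega

end AuxReturnWords

/-- Theorem (Durand–Host–Skau): if `x` is a non-periodic linearly recurrent sequence with
constant `K` and `u` a (non-empty) factor of `x`, then the number of distinct return
words to `u` in `x` is at most `4K³`. -/
theorem returnWords_card_bound {A : Type*} [Fintype A] (x : ℕ → A)
    (K : ℕ) (hlr : LinRec K x) (hnp : ¬ UltPeriodic x)
    (u : List A) (hu : u ≠ []) (huf : IsFactor x u) :
    {w : List A | IsReturnWord x u w}.Finite ∧
    {w : List A | IsReturnWord x u w}.ncard ≤ 4 * K ^ 3 := by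
  classical
  set n := u.length with hn
  have hn1 : 1 ≤ n := by
    rw [hn]; exact List.length_pos_iff.2 hu
  -- K ≥ 1
  have hK : 1 ≤ K := by
    have huf' := huf
    obtain ⟨i0, hi0⟩ := huf'
    obtain ⟨j0, h1, h2, _⟩ := hlr.2 u hu huf i0 hi0
    rw [← hn] at h2
    rcases Nat.eq_zero_or_pos K with h | h
    · subst h; simp at h2; omega
    · exact h
  set l := (K + 1) * n with hl
  set L := K * l with hL
  set δ := max (n / K) 1 with hδdef
  have hδ : 1 ≤ δ := le_max_right _ _
  have h1l : 1 ≤ l := by rw [hl]; exact Nat.mul_pos (by omega) (by omega)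
  have hnl : n ≤ l := by rw [hl]; exact Nat.le_mul_of_pos_left n (by omega)
  have hLpos : 1 ≤ L := by rw [hL]; exact Nat.mul_pos (by omega) h1l
  -- minimum distance between occurrences of u
  have hdist : ∀ a b : ℕ, occursAt x u a → occursAt x u b → a < b → δ ≤ b - a := by
    intro a b ha hb hab
    have h1 : ¬ (K * (b - a + 1) ≤ n) := by
      intro h
      exact hnp (periodic_of_close hlr hK ha hb hab (by rw [← hn]; exact h))
    have h2 : n / K ≤ b - a := by
      have hc : K * (n / K) ≤ n := Nat.mul_div_le n K
      have h3 : K * (n / K) < K * (b - a + 1) := by omega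
      have := Nat.lt_of_mul_lt_mul_left h3
      omega
    omega
  -- finset bound
  have key : ∀ S : Finset (List A), (∀ w ∈ S, IsReturnWord x u w) →
      S.card ≤ (L - 1) / δ + 1 := by
    intro S hS
    choose I J h1 h2 h3 h4 h5 using hS
    set m := S.attach.sup (fun w => I w.1 w.2) with hm
    have hmle : ∀ (w : List A) (hw : w ∈ S), I w hw ≤ m :=
      fun w hw => Finset.le_sup (f := fun w : {w // w ∈ S} => I w.1 w.2)
        (Finset.mem_attach S ⟨w, hw⟩)
    have hQex : ∀ (w : List A) (hw : w ∈ S),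
        ∃ q, m ≤ q ∧ q < m + L ∧ occursAt x (seqWord x (I w hw) l) q := by
      intro w hw
      have hne : seqWord x (I w hw) l ≠ [] := seqWord_ne_nil (by omega)
      have hKd : 0 < K * (seqWord x (I w hw) l).length := by
        rw [seqWord_length]; exact Nat.mul_pos (by omega) (by omega)
      obtain ⟨r, hr1, hr2, hr3⟩ :=
        chain_occ hlr hne hKd (occursAt_seqWord_self x (I w hw) l) m (hmle w hw)
      rw [seqWord_length] at hr2
      rw [← hL] at hr2
      exact ⟨r, hr1, hr2, hr3⟩
    choose Q hQ1 hQ2 hQ3 using hQex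
    have hoccu : ∀ (w : List A) (hw : w ∈ S), occursAt x u (Q w hw) := by
      intro w hw
      apply occursAt_transfer (h2 w hw)
      intro t ht
      rw [← hn] at ht
      exact occursAt_seqWord_iff.1 (hQ3 w hw) t (by omega)
    calc S.card = S.attach.card := Finset.card_attach.symm
      _ ≤ (Finset.range ((L - 1) / δ + 1)).card := by
          apply Finset.card_le_card_of_injOn
            (fun w : {w // w ∈ S} => (Q w.1 w.2 - m) / δ)
          · intro w _
            simp only [Finset.mem_coe, Finset.mem_range]
            have := hQ2 w.1 w.2
            have h6 : Q w.1 w.2 - m ≤ L - 1 := by omega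
            have := Nat.div_le_div_right (c := δ) h6
            omega
          · intro w1 _ w2 _ hEq
            simp only at hEq
            rcases lt_trichotomy (Q w1.1 w1.2) (Q w2.1 w2.2) with h | h | h
            · exfalso
              have hd := hdist _ _ (hoccu w1.1 w1.2) (hoccu w2.1 w2.2) h
              have hb := bucket_aux (a := Q w1.1 w1.2 - m) (b := Q w2.1 w2.2 - m)
                (by omega) (by omega) hEq
              have := hQ1 w1.1 w1.2
              have := hQ1 w2.1 w2.2
              omega
            · have hweq : w1.1 = w2.1 := by
                have hru := returnWord_unique hlr hu (h1 w1.1 w1.2) (h2 w1.1 w1.2)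
                  (h3 w1.1 w1.2) (h4 w1.1 w1.2) (h1 w2.1 w2.2) (h2 w2.1 w2.2)
                  (h3 w2.1 w2.2) (h4 w2.1 w2.2)
                  (q := Q w1.1 w1.2)
                  (by rw [← hn, ← hl]; exact hQ3 w1.1 w1.2)
                  (by rw [← hn, ← hl, h]; exact hQ3 w2.1 w2.2)
                rw [h5 w1.1 w1.2, h5 w2.1 w2.2, hru]
              exact Subtype.ext hweq
            · exfalso
              have hd := hdist _ _ (hoccu w2.1 w2.2) (hoccu w1.1 w1.2) h
              have hb := bucket_aux (a := Q w2.1 w2.2 - m) (b := Q w1.1 w1.2 - m)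
                (by omega) (by omega) hEq.symm
              have := hQ1 w1.1 w1.2
              have := hQ1 w2.1 w2.2
              omega
      _ = (L - 1) / δ + 1 := Finset.card_range _
  -- arithmetic: (L-1)/δ + 1 ≤ 4K³
  have harith : (L - 1) / δ + 1 ≤ 4 * K ^ 3 := by
    rcases Nat.lt_or_ge n K with hcase | hcase
    · -- n < K : δ = 1
      have hd1 : δ = 1 := by
        have : n / K = 0 := Nat.div_eq_of_lt hcase
        omega
      rw [hd1, Nat.div_one]
      have hfin : L ≤ 4 * K ^ 3 := by
        have hx1 : l ≤ 2 * K * K := by rw [hl]; nlinarith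
        have hx2 : L ≤ K * (2 * K * K) := by
          rw [hL]; exact Nat.mul_le_mul_left K hx1
        nlinarith
      omega
    · -- K ≤ n : δ = n / K ≥ 1
      have hc1 : 1 ≤ n / K := (Nat.one_le_div_iff (by omega)).2 hcase
      have hdc : δ = n / K := max_eq_left hc1
      have hnlt : n < K * (n / K) + K := by
        have := Nat.div_add_mod n K
        have := Nat.mod_lt n (y := K) (by omega)
        omega
      have hn2 : n ≤ 2 * K * (n / K) := by
        have : K ≤ K * (n / K) := Nat.le_mul_of_pos_right K hc1
        nlinarith
      have hLle : L ≤ 2 * K ^ 2 * (K + 1) * δ := by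
        rw [hL, hl, hdc]
        calc K * ((K + 1) * n) ≤ K * ((K + 1) * (2 * K * (n / K))) := by
              exact Nat.mul_le_mul_left _ (Nat.mul_le_mul_left _ hn2)
          _ = 2 * K ^ 2 * (K + 1) * (n / K) := by ring
      have hdiv : (L - 1) / δ < 2 * K ^ 2 * (K + 1) := by
        rw [Nat.div_lt_iff_lt_mul (by omega)]
        calc L - 1 < L := by omega
          _ ≤ 2 * K ^ 2 * (K + 1) * δ := hLle
      have : 2 * K ^ 2 * (K + 1) ≤ 4 * K ^ 3 := by nlinarith
      omega
  have hfin : {w : List A | IsReturnWord x u w}.Finite := by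
    by_contra hinf
    obtain ⟨t, ht1, ht2⟩ :=
      Set.Infinite.exists_subset_card_eq hinf (4 * K ^ 3 + 1)
    have := key t (fun w hw => ht1 hw)
    omega
  refine ⟨hfin, ?_⟩
  rw [Set.ncard_eq_toFinset_card _ hfin]
  exact le_trans (key hfin.toFinset (fun w hw => hfin.mem_toFinset.1 hw)) harith
end
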